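/- Let W ∈ ℝ^{q×q} be symmetric positive definite with w_min I ⪯ W for some w_min > 0, let A ∈ ℝ^{(m+1)×q} satisfy ‖A‖₂ ≤ a, and suppose M := A W⁻¹ Aᵀ satisfies λ_min(M) ≥ μ_M > 0. Let b ∈ ℝ^{m+1} and c^π, c^ℓ ∈ ℝ^q, set r := b − A c^ℓ, and let ĉ := c^π + W⁻¹ Aᵀ M⁻¹ (b − A c^π). If ‖c^π − c^ℓ‖_W ≤ κ_π Δ² and ‖r‖₂ ≤ ρ for constants κ_π, ρ ≥ 0 and Δ > 0, then ‖ĉ − c^ℓ‖₂ ≤ (κ_π/√w_min) Δ² + a ρ / (w_min μ_M). -/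

import Mathlib

open Matrix
open scoped Matrix.Norms.L2Operator

/-- The smallest eigenvalue of a (Hermitian) real matrix. -/
noncomputable def lambdaMin {ι : Type*} [Fintype ι] [DecidableEq ι] [Nonempty ι]
    (M : Matrix ι ι ℝ) : ℝ :=
  if h : M.IsHermitian then ⨅ i, h.eigenvalues i else 0

/-- The `W`-weighted norm `‖v‖_W = √(vᵀ W v)`. -/
noncomputable def wNorm {ι : Type*} [Fintype ι] (W : Matrix ι ι ℝ) (v : ι → ℝ) : ℝ :=
  Real.sqrt (v ⬝ᵥ (W *ᵥ v))

/-- The Euclidean norm `‖v‖₂ = √(vᵀ v)` of a vector. -/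
noncomputable def eNorm {ι : Type*} [Fintype ι] (v : ι → ℝ) : ℝ :=
  Real.sqrt (v ⬝ᵥ v)

lemma eNorm_eq_norm {n : Type*} [Fintype n] (v : n → ℝ) :
    eNorm v = ‖(WithLp.equiv 2 (n → ℝ)).symm v‖ := by
  rw [eNorm, EuclideanSpace.norm_eq]
  congr 1
  simp [dotProduct, Real.norm_eq_abs, sq_abs, pow_two]

lemma eNorm_nonneg {n : Type*} [Fintype n] (v : n → ℝ) : 0 ≤ eNorm v :=
  Real.sqrt_nonneg _

lemma dot_self_nonneg {n : Type*} [Fintype n] (v : n → ℝ) : 0 ≤ v ⬝ᵥ v :=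
  Finset.sum_nonneg fun _ _ => mul_self_nonneg _

lemma eNorm_sq {n : Type*} [Fintype n] (v : n → ℝ) : eNorm v ^ 2 = v ⬝ᵥ v :=
  Real.sq_sqrt (dot_self_nonneg v)

lemma eNorm_add_le {n : Type*} [Fintype n] (u v : n → ℝ) :
    eNorm (u + v) ≤ eNorm u + eNorm v := by
  simp only [eNorm_eq_norm]
  rw [show (WithLp.equiv 2 (n → ℝ)).symm (u + v)
      = (WithLp.equiv 2 (n → ℝ)).symm u + (WithLp.equiv 2 (n → ℝ)).symm v from rfl]
  exact norm_add_le _ _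

lemma dot_le_eNorm {n : Type*} [Fintype n] (x y : n → ℝ) : x ⬝ᵥ y ≤ eNorm x * eNorm y := by
  simp only [eNorm_eq_norm]
  have := real_inner_le_norm ((WithLp.equiv 2 (n → ℝ)).symm x) ((WithLp.equiv 2 (n → ℝ)).symm y)
  simpa [PiLp.inner_apply, RCLike.inner_apply, dotProduct, mul_comm] using this

lemma eNorm_mulVec_le {m n : Type*} [Fintype m] [Fintype n] [DecidableEq m] [DecidableEq n]
    (A : Matrix m n ℝ) (v : n → ℝ) :
    eNorm (A *ᵥ v) ≤ ‖A‖ * eNorm v := by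
  simp only [eNorm_eq_norm]
  exact A.l2_opNorm_mulVec ((WithLp.equiv 2 (n → ℝ)).symm v)

lemma sub_smul_one_posSemidef {n : Type*} [Fintype n] [DecidableEq n]
    {M : Matrix n n ℝ} (hM : M.IsHermitian) {μ : ℝ}
    (h : ∀ i, μ ≤ hM.eigenvalues i) : (M - μ • (1 : Matrix n n ℝ)).PosSemidef := by
  set U : Matrix n n ℝ := (hM.eigenvectorUnitary : Matrix n n ℝ) with hU
  have hUU : U * star U = 1 := (Matrix.mem_unitaryGroup_iff).mp hM.eigenvectorUnitary.2
  have key : M - μ • (1 : Matrix n n ℝ)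
      = U * diagonal (fun i => hM.eigenvalues i - μ) * star U := by
    calc M - μ • (1 : Matrix n n ℝ)
        = U * diagonal (RCLike.ofReal ∘ hM.eigenvalues) * star U - μ • (U * star U) := by
          rw [hUU, hU, ← Unitary.conjStarAlgAut_apply (S := ℝ), ← hM.spectral_theorem]
      _ = U * diagonal (RCLike.ofReal ∘ hM.eigenvalues) * star U - U * (μ • 1) * star U := by
          rw [Matrix.mul_smul, Matrix.smul_mul, mul_one]
      _ = U * (diagonal (RCLike.ofReal ∘ hM.eigenvalues) - μ • 1) * star U := by
          rw [Matrix.mul_sub, Matrix.sub_mul]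
      _ = U * diagonal (fun i => hM.eigenvalues i - μ) * star U := by
          congr 1
          congr 1
          ext i j
          by_cases hij : i = j <;>
            simp [diagonal, Matrix.one_apply, hij, Matrix.sub_apply, Matrix.smul_apply]
  rw [key]
  exact (posSemidef_diagonal_iff.mpr fun i => sub_nonneg.mpr (h i)).mul_mul_conjTranspose_same U

lemma quad_ge_mu {n : Type*} [Fintype n] [DecidableEq n] {M : Matrix n n ℝ}
    (hM : M.IsHermitian) {μ : ℝ} (h : ∀ i, μ ≤ hM.eigenvalues i) (x : n → ℝ) :
    μ * (x ⬝ᵥ x) ≤ x ⬝ᵥ (M *ᵥ x) := by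
  have := (sub_smul_one_posSemidef hM h).dotProduct_mulVec_nonneg x
  simp only [star_trivial, sub_mulVec, dotProduct_sub, smul_mulVec, one_mulVec,
    dotProduct_smul, sub_nonneg, smul_eq_mul] at this
  exact this

theorem stmt6 (m q : ℕ)
    (W : Matrix (Fin q) (Fin q) ℝ) (hW : W.PosDef)
    (wmin : ℝ) (hwmin : 0 < wmin)
    (hlow : (W - wmin • (1 : Matrix (Fin q) (Fin q) ℝ)).PosSemidef)
    (A : Matrix (Fin (m + 1)) (Fin q) ℝ) (a : ℝ) (hA : ‖A‖ ≤ a)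
    (M : Matrix (Fin (m + 1)) (Fin (m + 1)) ℝ)
    (hM : M = A * W⁻¹ * Aᵀ)
    (μM : ℝ) (hμM : 0 < μM) (hmin : μM ≤ lambdaMin M)
    (b : Fin (m + 1) → ℝ) (cpi cl : Fin q → ℝ)
    (r : Fin (m + 1) → ℝ) (hr : r = b - A *ᵥ cl)
    (chat : Fin q → ℝ)
    (hchat : chat = cpi + (W⁻¹ * Aᵀ * M⁻¹) *ᵥ (b - A *ᵥ cpi))
    (κπ ρ Δ : ℝ) (hκπ : 0 ≤ κπ) (hρ : 0 ≤ ρ) (hΔ : 0 < Δ)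
    (hprior : wNorm W (cpi - cl) ≤ κπ * Δ ^ 2)
    (hrbound : eNorm r ≤ ρ) :
    eNorm (chat - cl) ≤ (κπ / Real.sqrt wmin) * Δ ^ 2 + a * ρ / (wmin * μM) := by
  classical
  have ha0 : 0 ≤ a := (norm_nonneg A).trans hA
  -- W facts
  have hWdet : IsUnit W.det := isUnit_iff_ne_zero.mpr hW.det_pos.ne'
  have hWW : W * W⁻¹ = 1 := W.mul_nonsing_inv hWdet
  have hWT : Wᵀ = W := by
    have := hW.isHermitian.eq
    rwa [conjTranspose_eq_transpose_of_trivial] at this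
  have hWinvT : W⁻¹ᵀ = W⁻¹ := by rw [transpose_nonsing_inv, hWT]
  have hWlow : ∀ x : Fin q → ℝ, wmin * (x ⬝ᵥ x) ≤ x ⬝ᵥ (W *ᵥ x) := by
    intro x
    have := hlow.dotProduct_mulVec_nonneg x
    simpa only [star_trivial, sub_mulVec, dotProduct_sub, smul_mulVec, one_mulVec,
      dotProduct_smul, sub_nonneg, smul_eq_mul] using this
  have hWnorm : ∀ x : Fin q → ℝ, Real.sqrt wmin * eNorm x ≤ wNorm W x := by
    intro x
    rw [eNorm, wNorm, ← Real.sqrt_mul hwmin.le]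
    exact Real.sqrt_le_sqrt (hWlow x)
  -- M facts
  have hHerm : M.IsHermitian := by
    rw [IsHermitian, conjTranspose_eq_transpose_of_trivial, hM, transpose_mul, transpose_mul,
      transpose_transpose, hWinvT]
    exact (Matrix.mul_assoc A W⁻¹ Aᵀ).symm
  have hEig : ∀ i, μM ≤ hHerm.eigenvalues i := by
    intro i
    unfold lambdaMin at hmin
    rw [dif_pos hHerm] at hmin
    exact hmin.trans (ciInf_le (Set.Finite.bddBelow (Set.finite_range _)) i)
  have hMquad : ∀ x, μM * (x ⬝ᵥ x) ≤ x ⬝ᵥ (M *ᵥ x) := quad_ge_mu hHerm hEig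
  have hMpd : M.PosDef := by
    refine Matrix.PosDef.of_dotProduct_mulVec_pos hHerm fun x hx => ?_
    have h2 : 0 < x ⬝ᵥ x := by
      refine lt_of_le_of_ne (dot_self_nonneg x) fun hc => hx ?_
      exact (dotProduct_star_self_eq_zero (v := x)).mp (by simpa using hc.symm)
    have : (0:ℝ) < x ⬝ᵥ (M *ᵥ x) := lt_of_lt_of_le (by positivity) (hMquad x)
    simpa using this
  have hMdet : IsUnit M.det := isUnit_iff_ne_zero.mpr hMpd.det_pos.ne'
  have hMM : M * M⁻¹ = 1 := M.mul_nonsing_inv hMdet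
  have hMinvquad : ∀ z : Fin (m+1) → ℝ, 0 ≤ z ⬝ᵥ (M⁻¹ *ᵥ z) := fun z => by
    simpa using hMpd.posSemidef.inv.dotProduct_mulVec_nonneg z
  -- opaque abbreviations
  obtain ⟨e, he⟩ : ∃ e : Fin q → ℝ, e = cpi - cl := ⟨_, rfl⟩
  obtain ⟨g, hg⟩ : ∃ g : Fin (m+1) → ℝ, g = M⁻¹ *ᵥ (A *ᵥ e) := ⟨_, rfl⟩
  obtain ⟨s, hsdef⟩ : ∃ s : Fin q → ℝ, s = Aᵀ *ᵥ g := ⟨_, rfl⟩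
  obtain ⟨p, hpdef⟩ : ∃ p : Fin q → ℝ, p = W⁻¹ *ᵥ s := ⟨_, rfl⟩
  obtain ⟨y, hydef⟩ : ∃ y : Fin (m+1) → ℝ, y = M⁻¹ *ᵥ r := ⟨_, rfl⟩
  obtain ⟨v, hvdef⟩ : ∃ v : Fin q → ℝ, v = W⁻¹ *ᵥ (Aᵀ *ᵥ y) := ⟨_, rfl⟩
  rw [show cpi - cl = e from he.symm] at hprior
  -- decomposition
  have hb : b - A *ᵥ cpi = r - A *ᵥ e := by
    rw [hr, he, mulVec_sub]; abel
  have hdecomp : chat - cl = (e - p) + v := by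
    have h1 : (W⁻¹ * Aᵀ * M⁻¹) *ᵥ r = v := by
      rw [hvdef, hydef]; simp only [mulVec_mulVec, Matrix.mul_assoc]
    have h2 : (W⁻¹ * Aᵀ * M⁻¹) *ᵥ (A *ᵥ e) = p := by
      rw [hpdef, hsdef, hg]; simp only [mulVec_mulVec, Matrix.mul_assoc]
    rw [hchat, hb, mulVec_sub, h1, h2, he]
    abel
  -- key matrix identity
  have hMid : ∀ u : Fin (m+1) → ℝ, A *ᵥ (W⁻¹ *ᵥ (Aᵀ *ᵥ u)) = M *ᵥ u := by
    intro u
    rw [hM]; simp only [mulVec_mulVec, Matrix.mul_assoc]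
  -- projection bound
  have hWp : W *ᵥ p = s := by rw [hpdef, mulVec_mulVec, hWW, one_mulVec]
  have hes : e ⬝ᵥ s = (A *ᵥ e) ⬝ᵥ g := by
    rw [hsdef, dotProduct_mulVec, vecMul_transpose]
  have hs_nonneg : 0 ≤ e ⬝ᵥ s := by
    rw [hes, hg]; exact hMinvquad (A *ᵥ e)
  have hvmW : p ᵥ* W = W *ᵥ p := by
    nth_rewrite 1 [← hWT]
    rw [vecMul_transpose]
  have hpWe : p ⬝ᵥ (W *ᵥ e) = e ⬝ᵥ s := by
    rw [dotProduct_mulVec, hvmW, hWp, dotProduct_comm]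
  have hps : p ⬝ᵥ s = e ⬝ᵥ s := by
    have hAp : A *ᵥ p = A *ᵥ e := by
      rw [hpdef, hsdef, hMid g, hg, mulVec_mulVec, hMM, one_mulVec]
    rw [hsdef, dotProduct_mulVec, vecMul_transpose, hAp, ← hes, hsdef]
  have hproj : (e - p) ⬝ᵥ (W *ᵥ (e - p)) ≤ e ⬝ᵥ (W *ᵥ e) := by
    have expand : (e - p) ⬝ᵥ (W *ᵥ (e - p))
        = e ⬝ᵥ (W *ᵥ e) - e ⬝ᵥ (W *ᵥ p) - p ⬝ᵥ (W *ᵥ e) + p ⬝ᵥ (W *ᵥ p) := by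
      rw [mulVec_sub, dotProduct_sub, sub_dotProduct, sub_dotProduct]; ring
    rw [expand, hWp, hpWe, hps]
    linarith
  -- first term
  have hsq : 0 < Real.sqrt wmin := Real.sqrt_pos.mpr hwmin
  have h1 : eNorm (e - p) ≤ (κπ / Real.sqrt wmin) * Δ ^ 2 := by
    rw [div_mul_eq_mul_div, le_div_iff₀ hsq]
    calc eNorm (e - p) * Real.sqrt wmin = Real.sqrt wmin * eNorm (e - p) := mul_comm _ _
      _ ≤ wNorm W (e - p) := hWnorm _
      _ ≤ wNorm W e := Real.sqrt_le_sqrt hproj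
      _ ≤ κπ * Δ ^ 2 := hprior
  -- second term
  have hy_bound : eNorm y ≤ ρ / μM := by
    have hMy : M *ᵥ y = r := by rw [hydef, mulVec_mulVec, hMM, one_mulVec]
    have hq : μM * (y ⬝ᵥ y) ≤ y ⬝ᵥ r := by have := hMquad y; rwa [hMy] at this
    have hcs : y ⬝ᵥ r ≤ eNorm y * ρ :=
      (dot_le_eNorm y r).trans (mul_le_mul_of_nonneg_left hrbound (eNorm_nonneg y))
    rw [le_div_iff₀ hμM]
    rcases eq_or_lt_of_le (eNorm_nonneg y) with h0 | h0
    · rw [← h0, zero_mul]; exact hρ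
    · nlinarith [eNorm_sq y]
  have hv_bound : eNorm v ≤ a * (ρ / μM) / wmin := by
    have hWv : W *ᵥ v = Aᵀ *ᵥ y := by rw [hvdef, mulVec_mulVec, hWW, one_mulVec]
    have hq : wmin * (v ⬝ᵥ v) ≤ v ⬝ᵥ (Aᵀ *ᵥ y) := by have := hWlow v; rwa [hWv] at this
    have h2 : v ⬝ᵥ (Aᵀ *ᵥ y) = (A *ᵥ v) ⬝ᵥ y := by rw [dotProduct_mulVec, vecMul_transpose]
    have h3 : (A *ᵥ v) ⬝ᵥ y ≤ (a * eNorm v) * eNorm y := by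
      refine (dot_le_eNorm _ _).trans ?_
      exact mul_le_mul_of_nonneg_right ((eNorm_mulVec_le A v).trans
        (mul_le_mul_of_nonneg_right hA (eNorm_nonneg v))) (eNorm_nonneg y)
    rw [le_div_iff₀ hwmin]
    rcases eq_or_lt_of_le (eNorm_nonneg v) with h0 | h0
    · rw [← h0, zero_mul]; positivity
    · have hy0 : 0 ≤ eNorm y := eNorm_nonneg y
      nlinarith [eNorm_sq v, mul_le_mul_of_nonneg_left hy_bound (mul_nonneg ha0 h0.le)]
  -- combine
  have hw0 : wmin ≠ 0 := hwmin.ne'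
  have hm0 : μM ≠ 0 := hμM.ne'
  calc eNorm (chat - cl) = eNorm ((e - p) + v) := by rw [hdecomp]
    _ ≤ eNorm (e - p) + eNorm v := eNorm_add_le _ _
    _ ≤ (κπ / Real.sqrt wmin) * Δ ^ 2 + a * (ρ / μM) / wmin := add_le_add h1 hv_bound
    _ = (κπ / Real.sqrt wmin) * Δ ^ 2 + a * ρ / (wmin * μM) := by
        congr 1
        ring
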